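/- For every c > 0 and every natural number D ≥ 1 there exists a constant C = C(c,D) > 0 such that: for every k ≥ 1, every block-model parameter pair (p,Q) on k communities with p i ≥ c for all i, and every connected finite simple graph H with |E(H)| ≤ D and |E(H)| ≥ |V(H)| (i.e. H is connected and not a tree), Ψ_{p,Q}(H) ≤ C · Ψ_{p,Q}(Cyc_4). -/

import Mathlib

set_option linter.unusedVariables false

open Finset

open Finset

/-- The Fourier coefficient Φ_{p,Q}(H) of a finite simple graph `H`. -/
noncomputable def Phi {k : ℕ} (p : Fin k → ℝ) (Q : Fin k → Fin k → ℝ)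
    (hQ : ∀ i j, Q i j = Q j i) {V : Type} [Fintype V] [DecidableEq V]
    (H : SimpleGraph V) [DecidableRel H.Adj] : ℝ :=
  ∑ x : V → Fin k, (∏ v, p (x v)) *
    ∏ e ∈ H.edgeFinset,
      Sym2.lift ⟨fun u v => Q (x u) (x v), fun u v => hQ (x u) (x v)⟩ e

/-- The partition value Ψ_{p,Q}(H) = |Φ_{p,Q}(H)|^{1/|V(H)|}. -/
noncomputable def Psi {k : ℕ} (p : Fin k → ℝ) (Q : Fin k → Fin k → ℝ)
    (hQ : ∀ i j, Q i j = Q j i) {V : Type} [Fintype V] [DecidableEq V]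
    (H : SimpleGraph V) [DecidableRel H.Adj] : ℝ :=
  |Phi p Q hQ H| ^ ((Fintype.card V : ℝ)⁻¹)

/-- The star graph with one center (vertex 0) joined to `t` leaves. -/
def StarGraph (t : ℕ) : SimpleGraph (Fin (t + 1)) where
  Adj u v := u ≠ v ∧ (u = 0 ∨ v = 0)
  symm := ⟨fun u v h => ⟨h.1.symm, h.2.symm⟩⟩
  loopless := ⟨fun u h => h.1 rfl⟩

instance (t : ℕ) : DecidableRel (StarGraph t).Adj :=
  fun u v => inferInstanceAs (Decidable (u ≠ v ∧ (u = 0 ∨ v = 0)))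

/-- The cycle graph on 4 vertices. -/
def Cyc4 : SimpleGraph (Fin 4) where
  Adj u v := u ≠ v ∧ ((u.val + 1) % 4 = v.val ∨ (v.val + 1) % 4 = u.val)
  symm := ⟨fun u v h => ⟨h.1.symm, h.2.symm⟩⟩
  loopless := ⟨fun u h => h.1 rfl⟩

instance : DecidableRel Cyc4.Adj :=
  fun u v => inferInstanceAs
    (Decidable (u ≠ v ∧ ((u.val + 1) % 4 = v.val ∨ (v.val + 1) % 4 = u.val)))


lemma sum_prod_pi_eq_one {k : ℕ} {V : Type} [Fintype V] [DecidableEq V]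
    (p : Fin k → ℝ) (hpsum : ∑ i, p i = 1) :
    ∑ x : V → Fin k, ∏ v, p (x v) = 1 := by
  have h := Finset.prod_univ_sum (fun _ : V => (univ : Finset (Fin k))) (fun _ j => p j)
  rw [Fintype.piFinset_univ] at h
  rw [← h]; simp [hpsum]

lemma phi_abs_le {k : ℕ} (p : Fin k → ℝ) (Q : Fin k → Fin k → ℝ)
    (hQ : ∀ i j, Q i j = Q j i) {V : Type} [Fintype V] [DecidableEq V]
    (H : SimpleGraph V) [DecidableRel H.Adj]
    (hp0 : ∀ i, 0 ≤ p i) (hpsum : ∑ i, p i = 1)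
    {B : ℝ} (hB : 0 ≤ B) (hQB : ∀ i j, |Q i j| ≤ B) :
    |Phi p Q hQ H| ≤ B ^ H.edgeFinset.card := by
  have h1 : ∀ x : V → Fin k,
      |(∏ v, p (x v)) * ∏ e ∈ H.edgeFinset,
        Sym2.lift ⟨fun u v => Q (x u) (x v), fun u v => hQ (x u) (x v)⟩ e|
        ≤ (∏ v, p (x v)) * B ^ H.edgeFinset.card := by
    intro x
    rw [abs_mul, abs_of_nonneg (Finset.prod_nonneg fun v _ => hp0 (x v))]
    apply mul_le_mul_of_nonneg_left _ (Finset.prod_nonneg fun v _ => hp0 (x v))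
    rw [Finset.abs_prod]
    calc ∏ e ∈ H.edgeFinset,
          |Sym2.lift ⟨fun u v => Q (x u) (x v), fun u v => hQ (x u) (x v)⟩ e|
        ≤ ∏ e ∈ H.edgeFinset, B := by
          apply Finset.prod_le_prod (fun e _ => abs_nonneg _)
          intro e _
          induction e using Sym2.ind with
          | _ u v => rw [Sym2.lift_mk]; exact hQB (x u) (x v)
      _ = B ^ H.edgeFinset.card := Finset.prod_const B
  calc |Phi p Q hQ H| ≤ ∑ x : V → Fin k, |(∏ v, p (x v)) * ∏ e ∈ H.edgeFinset,
          Sym2.lift ⟨fun u v => Q (x u) (x v), fun u v => hQ (x u) (x v)⟩ e| :=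
        Finset.abs_sum_le_sum_abs _ _
    _ ≤ ∑ x : V → Fin k, (∏ v, p (x v)) * B ^ H.edgeFinset.card :=
        Finset.sum_le_sum fun x _ => h1 x
    _ = (∑ x : V → Fin k, ∏ v, p (x v)) * B ^ H.edgeFinset.card := by
        rw [Finset.sum_mul]
    _ = B ^ H.edgeFinset.card := by rw [sum_prod_pi_eq_one p hpsum, one_mul]

def e4 (α : Type*) : (Fin 4 → α) ≃ α × α × α × α where
  toFun x := (x 0, x 1, x 2, x 3)
  invFun q := ![q.1, q.2.1, q.2.2.1, q.2.2.2]
  left_inv x := by funext i; fin_cases i <;> rfl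
  right_inv q := rfl

lemma prod4 {β : Type*} [CommMonoid β] (f : Sym2 (Fin 4) → β) :
    ∏ e ∈ ({s(0,1),s(1,2),s(2,3),s(0,3)} : Finset (Sym2 (Fin 4))), f e
      = f s(0,1) * (f s(1,2) * (f s(2,3) * f s(0,3))) := by
  rw [Finset.prod_insert (by decide), Finset.prod_insert (by decide),
    Finset.prod_insert (by decide), Finset.prod_singleton]

lemma phiC4 {k : ℕ} (p : Fin k → ℝ) (Q : Fin k → Fin k → ℝ)
    (hQ : ∀ i j, Q i j = Q j i) :
    Phi p Q hQ Cyc4 = ∑ a, ∑ c, p a * p c * (∑ b, p b * (Q a b * Q b c)) ^ 2 := by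
  have hE : Cyc4.edgeFinset = ({s(0,1),s(1,2),s(2,3),s(0,3)} : Finset (Sym2 (Fin 4))) := by
    ext e; induction e using Sym2.ind with
    | _ u v => simp only [SimpleGraph.mem_edgeFinset, SimpleGraph.mem_edgeSet]; fin_cases u <;> fin_cases v <;> simp [Cyc4] <;> decide
  unfold Phi
  simp only [hE, prod4, Sym2.lift_mk, Fin.prod_univ_four]
  rw [← Equiv.sum_comp (e4 (Fin k)).symm]
  have he : ∀ q : Fin k × Fin k × Fin k × Fin k,
      (e4 (Fin k)).symm q = ![q.1, q.2.1, q.2.2.1, q.2.2.2] := fun q => rfl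
  simp only [he]
  simp only [Fintype.sum_prod_type, e4, Equiv.coe_fn_symm_mk,
    Matrix.cons_val_zero, Matrix.cons_val_one, Matrix.head_cons,
    Matrix.cons_val_two, Matrix.tail_cons, Matrix.cons_val_three]
  refine Finset.sum_congr rfl fun a _ => ?_
  rw [Finset.sum_comm]
  refine Finset.sum_congr rfl fun c _ => ?_
  simp only [sq, Finset.mul_sum, Finset.sum_mul]
  refine Finset.sum_congr rfl fun b _ => ?_
  refine Finset.sum_congr rfl fun d _ => ?_
  rw [hQ d c]
  ring


/-- for SBMs with non-vanishing community probabilities, 4-cycles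
dominate connected graphs which are not trees. -/
theorem stmt7 (c : ℝ) (hc : 0 < c) (D : ℕ) (hD : 1 ≤ D) :
    ∃ C : ℝ, 0 < C ∧
      ∀ (k : ℕ), 1 ≤ k →
      ∀ (p : Fin k → ℝ) (Q : Fin k → Fin k → ℝ),
        (∀ i, 0 ≤ p i) → (∑ i, p i = 1) →
        ∀ (hQ : ∀ i j, Q i j = Q j i),
        (∀ i j, |Q i j| ≤ 1) → (∀ i, c ≤ p i) →
      ∀ (V : Type) [Fintype V] [DecidableEq V] (H : SimpleGraph V) [DecidableRel H.Adj],
        H.Connected → H.edgeFinset.card ≤ D →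
        Fintype.card V ≤ H.edgeFinset.card →
        Psi p Q hQ H ≤ C * Psi p Q hQ Cyc4 := by
  have hcr : (0:ℝ) < c ^ ((4:ℝ)⁻¹) := Real.rpow_pos_of_pos hc _
  refine ⟨c⁻¹ * (c ^ ((4:ℝ)⁻¹))⁻¹, mul_pos (inv_pos.mpr hc) (inv_pos.mpr hcr), ?_⟩
  intro k hk p Q hp0 hpsum hQ hQ1 hpc V _ _ H _ hconn hED hcard
  set C : ℝ := c⁻¹ * (c ^ ((4:ℝ)⁻¹))⁻¹ with hC
  set S : ℝ := ∑ a, ∑ b, p a * p b * Q a b ^ 2 with hSdef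
  have hS0 : 0 ≤ S :=
    Finset.sum_nonneg fun a _ => Finset.sum_nonneg fun b _ =>
      mul_nonneg (mul_nonneg (hp0 a) (hp0 b)) (sq_nonneg _)
  -- entrywise bound
  have hQB : ∀ i j, |Q i j| ≤ Real.sqrt S / c := by
    intro i j
    have h1 : p i * p j * Q i j ^ 2 ≤ S := by
      have hin : ∑ b, p i * p b * Q i b ^ 2 ≤ S :=
        Finset.single_le_sum (fun a _ => Finset.sum_nonneg fun b _ =>
          mul_nonneg (mul_nonneg (hp0 a) (hp0 b)) (sq_nonneg _)) (Finset.mem_univ i)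
      have hin2 : p i * p j * Q i j ^ 2 ≤ ∑ b, p i * p b * Q i b ^ 2 :=
        Finset.single_le_sum (fun b _ =>
          mul_nonneg (mul_nonneg (hp0 i) (hp0 b)) (sq_nonneg _)) (Finset.mem_univ j)
      linarith
    have h2 : (c * |Q i j|) ^ 2 ≤ S := by
      have := mul_le_mul (hpc i) (hpc j) hc.le (hp0 i)
      nlinarith [sq_nonneg (Q i j), sq_abs (Q i j)]
    have h3 : c * |Q i j| ≤ Real.sqrt S :=
      (Real.le_sqrt (by positivity) hS0).mpr h2
    exact (le_div_iff₀ hc).mpr (by rw [mul_comm]; exact h3)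
  set B : ℝ := Real.sqrt S / c with hBdef
  have hB0 : 0 ≤ B := div_nonneg (Real.sqrt_nonneg _) hc.le
  -- Psi H ≤ B
  have hn : 0 < Fintype.card V := @Fintype.card_pos V _ hconn.nonempty
  have hPsiH : Psi p Q hQ H ≤ B := by
    have hΦ1 : |Phi p Q hQ H| ≤ 1 := by
      have := phi_abs_le p Q hQ H hp0 hpsum (B := 1) zero_le_one hQ1
      simpa using this
    rcases le_or_gt B 1 with hB1 | hB1
    · have hΦ : |Phi p Q hQ H| ≤ B ^ Fintype.card V :=
        le_trans (phi_abs_le p Q hQ H hp0 hpsum hB0 hQB)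
          (pow_le_pow_of_le_one hB0 hB1 hcard)
      calc Psi p Q hQ H = |Phi p Q hQ H| ^ ((Fintype.card V : ℝ)⁻¹) := rfl
        _ ≤ (B ^ Fintype.card V) ^ ((Fintype.card V : ℝ)⁻¹) :=
            Real.rpow_le_rpow (abs_nonneg _) hΦ (by positivity)
        _ = B := by
            rw [← Real.rpow_natCast B (Fintype.card V), ← Real.rpow_mul hB0,
              mul_inv_cancel₀ (by exact_mod_cast hn.ne'), Real.rpow_one]
    · exact le_trans (Real.rpow_le_one (abs_nonneg _) hΦ1 (by positivity)) hB1.le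
  -- lower bound on Phi Cyc4
  have hC4 : c * S ^ 2 ≤ Phi p Q hQ Cyc4 := by
    rw [phiC4 p Q hQ]
    set G : Fin k → ℝ := fun a => ∑ b, p b * Q a b ^ 2 with hGdef
    have hG0 : ∀ a, 0 ≤ G a := fun a =>
      Finset.sum_nonneg fun b _ => mul_nonneg (hp0 b) (sq_nonneg _)
    have hSG : S = ∑ a, p a * G a := by
      refine Finset.sum_congr rfl fun a _ => ?_
      rw [Finset.mul_sum]
      exact Finset.sum_congr rfl fun b _ => by ring
    have hdiagG : ∀ a, (∑ b, p b * (Q a b * Q b a)) = G a := by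
      intro a
      refine Finset.sum_congr rfl fun b _ => ?_
      rw [hQ b a]; ring
    have hCS : S ^ 2 ≤ ∑ a, p a * G a ^ 2 := by
      have h := Finset.sum_mul_sq_le_sq_mul_sq univ
        (fun a => Real.sqrt (p a)) (fun a => Real.sqrt (p a) * G a)
      have e1 : ∀ a : Fin k, Real.sqrt (p a) * (Real.sqrt (p a) * G a) = p a * G a := by
        intro a; rw [← mul_assoc, Real.mul_self_sqrt (hp0 a)]
      have e2 : ∀ a : Fin k, Real.sqrt (p a) ^ 2 = p a := fun a => Real.sq_sqrt (hp0 a)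
      have e3 : ∀ a : Fin k, (Real.sqrt (p a) * G a) ^ 2 = p a * G a ^ 2 := by
        intro a; rw [mul_pow, Real.sq_sqrt (hp0 a)]
      rw [Finset.sum_congr rfl fun a _ => e1 a, Finset.sum_congr rfl fun a _ => e2 a,
        Finset.sum_congr rfl fun a _ => e3 a, hpsum, one_mul] at h
      rw [hSG]; exact h
    have hdiag : ∑ a, c * (p a * G a ^ 2)
        ≤ ∑ a, ∑ c', p a * p c' * (∑ b, p b * (Q a b * Q b c')) ^ 2 := by
      apply Finset.sum_le_sum
      intro a _
      have h1 : p a * p a * (∑ b, p b * (Q a b * Q b a)) ^ 2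
          ≤ ∑ c', p a * p c' * (∑ b, p b * (Q a b * Q b c')) ^ 2 :=
        Finset.single_le_sum
          (f := fun c' => p a * p c' * (∑ b, p b * (Q a b * Q b c')) ^ 2)
          (fun c' _ => mul_nonneg (mul_nonneg (hp0 a) (hp0 c')) (sq_nonneg _))
          (Finset.mem_univ a)
      rw [hdiagG a] at h1
      have hx : 0 ≤ (p a - c) * (p a * G a ^ 2) :=
        mul_nonneg (by linarith [hpc a]) (mul_nonneg (hp0 a) (sq_nonneg _))
      nlinarith [h1, hx]
    calc c * S ^ 2 ≤ c * ∑ a, p a * G a ^ 2 := by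
          apply mul_le_mul_of_nonneg_left hCS hc.le
      _ = ∑ a, c * (p a * G a ^ 2) := by rw [Finset.mul_sum]
      _ ≤ _ := hdiag
  have hPsiC4 : (c * S ^ 2) ^ ((4:ℝ)⁻¹) ≤ Psi p Q hQ Cyc4 := by
    have habs : c * S ^ 2 ≤ |Phi p Q hQ Cyc4| := le_trans hC4 (le_abs_self _)
    have : Psi p Q hQ Cyc4 = |Phi p Q hQ Cyc4| ^ ((4:ℝ)⁻¹) := by
      simp [Psi]
    rw [this]
    exact Real.rpow_le_rpow (by positivity) habs (by positivity)
  have hCeq : C * (c * S ^ 2) ^ ((4:ℝ)⁻¹) = B := by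
    rw [Real.mul_rpow hc.le (sq_nonneg S)]
    have h2 : ((S : ℝ) ^ 2) ^ ((4:ℝ)⁻¹) = Real.sqrt S := by
      rw [← Real.rpow_natCast S 2, ← Real.rpow_mul hS0]
      rw [Real.sqrt_eq_rpow]
      norm_num
    rw [h2, hBdef, hC]
    field_simp
  calc Psi p Q hQ H ≤ B := hPsiH
    _ = C * (c * S ^ 2) ^ ((4:ℝ)⁻¹) := hCeq.symm
    _ ≤ C * Psi p Q hQ Cyc4 :=
        mul_le_mul_of_nonneg_left hPsiC4
          (le_of_lt (mul_pos (inv_pos.mpr hc) (inv_pos.mpr hcr)))
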